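/- Let G be a connected graph of order n and minimum degree δ ≥ 2. Then ρ(G) − π(G) ≤ 3n/(4(δ+1)) + 3. -/

import Mathlib

open Finset SimpleGraph

lemma auxA {V : Type*} {G : SimpleGraph V} (hconn : G.Connected) {u v : V}
    (p : G.Walk u v) : ∀ k : ℕ, G.dist u (p.getVert k) ≤ k := by
  intro k
  induction k with
  | zero => simp
  | succ k ih =>
    by_cases h : k < p.length
    · have hadj := p.adj_getVert_succ h
      have h1 : G.dist (p.getVert k) (p.getVert (k+1)) = 1 :=
        SimpleGraph.dist_eq_one_iff_adj.mpr hadj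
      have := hconn.dist_triangle (u := u) (v := p.getVert k) (w := p.getVert (k+1))
      omega
    · have h1 : p.getVert (k+1) = v := p.getVert_of_length_le (by omega)
      have h2 : p.getVert k = v := p.getVert_of_length_le (by omega)
      rw [h1, ← h2]; omega

lemma auxB {V : Type*} {G : SimpleGraph V} (hconn : G.Connected) {u v : V}
    (p : G.Walk u v) {k : ℕ} (hk : k ≤ p.length) : G.dist (p.getVert k) v ≤ p.length - k := by
  have h := auxA hconn p.reverse (p.length - k)
  rw [p.getVert_reverse] at h
  have h2 : p.length - (p.length - k) = k := by omega
  rw [h2] at h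
  rw [SimpleGraph.dist_comm]
  exact h

lemma auxC {V : Type*} {G : SimpleGraph V} (hconn : G.Connected) {u v : V}
    (p : G.Walk u v) (hp : p.length = G.dist u v) {k : ℕ} (hk : k ≤ p.length) :
    G.dist u (p.getVert k) = k ∧ G.dist (p.getVert k) v = p.length - k := by
  have h1 := auxA hconn p k
  have h2 := auxB hconn p hk
  have h3 := hconn.dist_triangle (u := u) (v := p.getVert k) (w := v)
  omega

lemma auxSum : ∀ m : ℕ, ∑ j ∈ Finset.Icc 1 m, ((6:ℝ) * j - 2) = 3 * m^2 + m := by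
  intro m
  induction m with
  | zero => simp
  | succ m ih =>
    rw [Finset.sum_Icc_succ_top (by omega), ih]
    push_cast; ring

lemma auxKey {V : Type*} [Fintype V] [DecidableEq V] (G : SimpleGraph V)
    [DecidableRel G.Adj] (hconn : G.Connected) (hδ2 : 2 ≤ G.minDegree) (u z : V) :
    ∑ w : V, ((G.dist u w : ℝ) - (G.dist z w : ℝ)) ≤
      ((Fintype.card V : ℝ) - 1) *
        (3 * (Fintype.card V : ℝ) / (4 * ((G.minDegree : ℝ) + 1)) + 3) := by
  classical
  have hnev : Nonempty V := hconn.nonempty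
  set n := Fintype.card V with hn
  set t := G.minDegree + 1 with ht
  have htn : t ≤ n := by
    have h1 := G.minDegree_le_degree (Classical.arbitrary V)
    have h2 := G.degree_lt_card_verts (Classical.arbitrary V)
    omega
  have ht3 : 3 ≤ t := by omega
  have hn3 : 3 ≤ n := by omega
  set d := G.dist u z with hd
  have hfle : ∀ w : V, (G.dist u w : ℝ) - (G.dist z w : ℝ) ≤ (d : ℝ) := by
    intro w
    have h1 : G.dist u w ≤ d + G.dist z w := hconn.dist_triangle
    have := (Nat.cast_le (α := ℝ)).mpr h1
    push_cast at this
    linarith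
  have hrhs0 : (0:ℝ) ≤ 3 * (n : ℝ) / (4 * ((G.minDegree : ℝ) + 1)) := by positivity
  by_cases hd4 : d ≤ 3
  · -- small distance case
    have hsplit : ∑ w : V, ((G.dist u w : ℝ) - (G.dist z w : ℝ))
        = ((G.dist u u : ℝ) - (G.dist z u : ℝ))
          + ∑ w ∈ univ.erase u, ((G.dist u w : ℝ) - (G.dist z w : ℝ)) :=
      (Finset.add_sum_erase univ _ (mem_univ u)).symm
    have hbound : ∑ w ∈ univ.erase u, ((G.dist u w : ℝ) - (G.dist z w : ℝ))
        ≤ ((univ.erase u).card : ℝ) * 3 := by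
      have := Finset.sum_le_card_nsmul (univ.erase u)
        (fun w => (G.dist u w : ℝ) - (G.dist z w : ℝ)) 3
        (fun w _ => le_trans (hfle w) (by exact_mod_cast hd4))
      simpa [nsmul_eq_mul] using this
    have hcard : ((univ.erase u).card : ℝ) = (n : ℝ) - 1 := by
      rw [Finset.card_erase_of_mem (mem_univ u)]
      have : (1:ℕ) ≤ n := by omega
      push_cast [Finset.card_univ, ← hn, Nat.cast_sub this]
      ring
    rw [hsplit]
    have huu : G.dist u u = 0 := SimpleGraph.dist_self
    have hn1 : (1:ℝ) ≤ (n:ℝ) := by exact_mod_cast (by omega : 1 ≤ n)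
    have hzu : (0:ℝ) ≤ (G.dist z u : ℝ) := by positivity
    rw [hcard] at hbound
    rw [huu]
    have hpos : (0:ℝ) ≤ ((n:ℝ)-1) * (3 * (n : ℝ) / (4 * ((G.minDegree : ℝ) + 1))) :=
      mul_nonneg (by linarith) hrhs0
    push_cast
    nlinarith [hpos, hbound]
  · -- main case : d ≥ 4
    push_neg at hd4
    have hd4' : 4 ≤ d := hd4
    obtain ⟨p, hp⟩ := hconn.exists_walk_length_eq_dist u z
    rw [← hd] at hp
    set m := d / 3 with hm
    have hm1 : 1 ≤ m := by omega
    have h3m : 3 * m ≤ d := by omega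
    have h3m2 : d ≤ 3 * m + 2 := by omega
    set y : ℕ → V := fun j => p.getVert (d - 3*j) with hy
    have hyfact : ∀ j ≤ m, G.dist u (y j) = d - 3*j ∧ G.dist (y j) z = 3*j := by
      intro j hj
      have hk : d - 3*j ≤ p.length := by omega
      have := auxC hconn p hp hk
      constructor
      · exact this.1
      · rw [this.2, hp]; omega
    set ball : ℕ → Finset V := fun j => insert (y j) (G.neighborFinset (y j)) with hball
    have hcard : ∀ j, (t:ℕ) ≤ (ball j).card := by
      intro j
      have hnm : y j ∉ G.neighborFinset (y j) := by
        simp [SimpleGraph.mem_neighborFinset]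
      rw [hball]
      simp only []
      rw [Finset.card_insert_of_notMem hnm, G.card_neighborFinset_eq_degree]
      have := G.minDegree_le_degree (y j)
      omega
    have hballdist : ∀ j w, w ∈ ball j → G.dist (y j) w ≤ 1 := by
      intro j w hw
      rw [hball] at hw
      simp only [Finset.mem_insert, SimpleGraph.mem_neighborFinset] at hw
      rcases hw with h | h
      · rw [← h]; simp [SimpleGraph.dist_self]
      · rw [SimpleGraph.dist_eq_one_iff_adj.mpr h]
    -- pairwise disjointness
    have hdisj : (↑(Finset.Icc 1 m) : Set ℕ).PairwiseDisjoint ball := by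
      intro i hi j hj hij
      simp only [Finset.coe_Icc, Set.mem_Icc] at hi hj
      show Disjoint (ball i) (ball j)
      rw [Finset.disjoint_left]
      intro w hwi hwj
      have hdi := hballdist i w hwi
      have hdj := hballdist j w hwj
      have htri : G.dist (y i) (y j) ≤ 2 := by
        have h1 := hconn.dist_triangle (u := y i) (v := w) (w := y j)
        have h2 : G.dist w (y j) = G.dist (y j) w := SimpleGraph.dist_comm
        omega
      have hyi := (hyfact i hi.2).2
      have hyj := (hyfact j hj.2).2
      have ht1 : G.dist (y j) z ≤ G.dist (y j) (y i) + G.dist (y i) z :=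
        hconn.dist_triangle
      have ht2 : G.dist (y i) z ≤ G.dist (y i) (y j) + G.dist (y j) z :=
        hconn.dist_triangle
      have hcomm : G.dist (y j) (y i) = G.dist (y i) (y j) := SimpleGraph.dist_comm
      omega
    set T : Finset V := (Finset.Icc 1 m).biUnion ball with hT
    have hTcard : T.card = ∑ j ∈ Finset.Icc 1 m, (ball j).card :=
      Finset.card_biUnion (fun i hi j hj hij => hdisj hi hj hij)
    -- sum over T
    have hsumT : ∑ w ∈ T, ((G.dist u w : ℝ) - (G.dist z w : ℝ))
        ≤ (T.card : ℝ) * d - (t : ℝ) * (3 * (m:ℝ)^2 + m) := by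
      rw [hT, Finset.sum_biUnion hdisj]
      have hinner : ∀ j ∈ Finset.Icc 1 m,
          ∑ w ∈ ball j, ((G.dist u w : ℝ) - (G.dist z w : ℝ))
            ≤ ((ball j).card : ℝ) * d - (t : ℝ) * (6 * (j:ℝ) - 2) := by
        intro j hj
        rw [Finset.mem_Icc] at hj
        have hyu := (hyfact j hj.2).1
        have hyz := (hyfact j hj.2).2
        have hstep : ∀ w ∈ ball j, (G.dist u w : ℝ) - (G.dist z w : ℝ)
            ≤ (d:ℝ) - 6 * (j:ℝ) + 2 := by
          intro w hw
          have hbd := hballdist j w hw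
          have h1 : G.dist u w ≤ G.dist u (y j) + G.dist (y j) w := hconn.dist_triangle
          have h2 : G.dist (y j) z ≤ G.dist (y j) w + G.dist w z := hconn.dist_triangle
          have h3 : G.dist w z = G.dist z w := SimpleGraph.dist_comm
          have ha : G.dist u w + 3*j ≤ d + 1 := by omega
          have hb : 3*j ≤ 1 + G.dist z w := by omega
          have ha' := (Nat.cast_le (α := ℝ)).mpr ha
          have hb' := (Nat.cast_le (α := ℝ)).mpr hb
          push_cast at ha' hb'
          linarith
        have hsum := Finset.sum_le_card_nsmul (ball j)
          (fun w => (G.dist u w : ℝ) - (G.dist z w : ℝ)) ((d:ℝ) - 6 * (j:ℝ) + 2) hstep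
        simp only [nsmul_eq_mul] at hsum
        have hc := hcard j
        have hc' : (t : ℝ) ≤ ((ball j).card : ℝ) := by exact_mod_cast hc
        have hj1 : (1:ℝ) ≤ (j:ℝ) := by exact_mod_cast hj.1
        nlinarith [hc', hj1]
      calc ∑ j ∈ Finset.Icc 1 m, ∑ w ∈ ball j, ((G.dist u w : ℝ) - (G.dist z w : ℝ))
          ≤ ∑ j ∈ Finset.Icc 1 m, (((ball j).card : ℝ) * d - (t : ℝ) * (6 * (j:ℝ) - 2)) :=
            Finset.sum_le_sum hinner
        _ = (∑ j ∈ Finset.Icc 1 m, ((ball j).card : ℝ)) * d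
              - (t:ℝ) * ∑ j ∈ Finset.Icc 1 m, (6 * (j:ℝ) - 2) := by
            rw [Finset.sum_sub_distrib, Finset.sum_mul, Finset.mul_sum]
        _ = (T.card : ℝ) * d - (t : ℝ) * (3 * (m:ℝ)^2 + m) := by
            rw [auxSum m, hTcard]
            push_cast
            ring
    -- sum over complement
    have hsumTc : ∑ w ∈ Tᶜ, ((G.dist u w : ℝ) - (G.dist z w : ℝ))
        ≤ ((n:ℝ) - (T.card : ℝ)) * d := by
      have hsum := Finset.sum_le_card_nsmul Tᶜ
        (fun w => (G.dist u w : ℝ) - (G.dist z w : ℝ)) (d:ℝ) (fun w _ => hfle w)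
      simp only [nsmul_eq_mul] at hsum
      have hcc : (Tᶜ.card : ℝ) = (n:ℝ) - (T.card : ℝ) := by
        rw [Finset.card_compl, ← hn]
        have : T.card ≤ n := by rw [hn]; exact Finset.card_le_univ T
        push_cast [Nat.cast_sub this]
        ring
      rwa [hcc] at hsum
    have htotal : ∑ w : V, ((G.dist u w : ℝ) - (G.dist z w : ℝ))
        ≤ (n:ℝ) * d - (t:ℝ) * (3 * (m:ℝ)^2 + m) := by
      have hsplit := Finset.sum_add_sum_compl T
        (fun w => (G.dist u w : ℝ) - (G.dist z w : ℝ))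
      have := add_le_add hsumT hsumTc
      rw [hsplit] at this
      linarith
    -- n ≥ d + 1
    have hnd : d + 1 ≤ n := by
      have hinj : Function.Injective (fun k : Fin (d+1) => p.getVert k) := by
        intro a b hab
        have ha := (auxC hconn p hp (k := a) (by omega : (a:ℕ) ≤ p.length)).1
        have hb := (auxC hconn p hp (k := b) (by omega : (b:ℕ) ≤ p.length)).1
        simp only [] at hab
        rw [hab] at ha
        exact Fin.ext (by omega)
      have := Fintype.card_le_of_injective _ hinj
      simpa [hn] using this
    -- final arithmetic
    refine le_trans htotal ?_
    have hN : ((d:ℝ) + 1) ≤ (n:ℝ) := by exact_mod_cast hnd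
    have hD : (4:ℝ) ≤ (d:ℝ) := by exact_mod_cast hd4'
    have hM : (1:ℝ) ≤ (m:ℝ) := by exact_mod_cast hm1
    have hDm : (d:ℝ) ≤ 3*(m:ℝ) + 2 := by exact_mod_cast h3m2
    have hT3 : (3:ℝ) ≤ (t:ℝ) := by exact_mod_cast ht3
    have htmin : ((G.minDegree : ℝ) + 1) = (t:ℝ) := by rw [ht]; push_cast; ring
    rw [htmin]
    have h4t : (0:ℝ) < 4 * (t:ℝ) := by linarith
    rw [show ((n:ℝ)-1) * (3*(n:ℝ)/(4*(t:ℝ))+3)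
        = (((n:ℝ)-1)*(3*(n:ℝ)) + 3*((n:ℝ)-1)*(4*(t:ℝ)))/(4*(t:ℝ)) from by
      field_simp]
    rw [le_div_iff₀ h4t]
    nlinarith [sq_nonneg (3*(n:ℝ) - 6*(t:ℝ)*(m:ℝ)),
      mul_le_mul_of_nonneg_left hDm (by positivity : (0:ℝ) ≤ 4*(t:ℝ)*(n:ℝ)),
      mul_nonneg (mul_nonneg (by linarith : (0:ℝ) ≤ (t:ℝ)) (by linarith : (0:ℝ) ≤ (t:ℝ))) (by linarith : (0:ℝ) ≤ (m:ℝ) - 1),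
      mul_nonneg (by linarith : (0:ℝ) ≤ (t:ℝ) - 3) (by linarith : (0:ℝ) ≤ (n:ℝ)),
      mul_pos (by linarith : (0:ℝ) < (t:ℝ)) (by linarith : (0:ℝ) < (n:ℝ))]

theorem stmt3 {V : Type*} [Fintype V] [DecidableEq V] (G : SimpleGraph V)
    [DecidableRel G.Adj] (n δ : ℕ) (hn : Fintype.card V = n) (hδ : G.minDegree = δ) (hconn : G.Connected) (h2 : 2 ≤ δ) :
    (⨆ v : V, (∑ w : V, (G.dist v w : ℝ)) / ((n : ℝ) - 1)) - (⨅ v : V, (∑ w : V, (G.dist v w : ℝ)) / ((n : ℝ) - 1)) ≤ 3 * (n : ℝ) / (4 * ((δ : ℝ) + 1)) + 3 := by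
  subst hn hδ
  have hnev : Nonempty V := hconn.nonempty
  have hn3 : 3 ≤ Fintype.card V := by
    have h1 := G.minDegree_le_degree (Classical.arbitrary V)
    have h2' := G.degree_lt_card_verts (Classical.arbitrary V)
    omega
  have hn1 : (0:ℝ) < (Fintype.card V : ℝ) - 1 := by
    have : (3:ℝ) ≤ (Fintype.card V : ℝ) := by exact_mod_cast hn3
    linarith
  obtain ⟨u, hu⟩ := Finite.exists_max (fun x : V => ∑ w : V, (G.dist x w : ℝ))
  obtain ⟨z, hz⟩ := Finite.exists_min (fun x : V => ∑ w : V, (G.dist x w : ℝ))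
  have hsup : (⨆ x : V, (∑ w : V, (G.dist x w : ℝ)) / ((Fintype.card V : ℝ) - 1))
      ≤ (∑ w : V, (G.dist u w : ℝ)) / ((Fintype.card V : ℝ) - 1) := by
    apply ciSup_le
    intro x
    exact div_le_div_of_nonneg_right (hu x) hn1.le
  have hinf : (∑ w : V, (G.dist z w : ℝ)) / ((Fintype.card V : ℝ) - 1)
      ≤ (⨅ x : V, (∑ w : V, (G.dist x w : ℝ)) / ((Fintype.card V : ℝ) - 1)) := by
    apply le_ciInf
    intro x
    exact div_le_div_of_nonneg_right (hz x) hn1.le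
  have key := auxKey G hconn h2 u z
  calc (⨆ x : V, (∑ w : V, (G.dist x w : ℝ)) / ((Fintype.card V : ℝ) - 1))
        - (⨅ x : V, (∑ w : V, (G.dist x w : ℝ)) / ((Fintype.card V : ℝ) - 1))
      ≤ (∑ w : V, (G.dist u w : ℝ)) / ((Fintype.card V : ℝ) - 1)
        - (∑ w : V, (G.dist z w : ℝ)) / ((Fintype.card V : ℝ) - 1) := sub_le_sub hsup hinf
    _ = (∑ w : V, ((G.dist u w : ℝ) - (G.dist z w : ℝ))) / ((Fintype.card V : ℝ) - 1) := by
        rw [div_sub_div_same, Finset.sum_sub_distrib]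
    _ ≤ 3 * (Fintype.card V : ℝ) / (4 * ((G.minDegree : ℝ) + 1)) + 3 := by
        rw [div_le_iff₀ hn1]
        linarith [key]
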